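/- arXiv:1709.00580 — 10 statements merged into one kernel-verified Lean document; each statement's English description precedes it below -/
import Mathlib

section
/- For all natural numbers l, m with 0 ≤ m-1 ≤ l, the sum ∑_{k=m-1}^{l} (-1)^{k+m} · ((k+2)/(k+1)) · C(l,k) · C(k+1,m) equals 0 if l > m, equals 1 if l = m, and equals -1 - 1/(l+1) if l = m-1. -/
open Finset

lemma altQ (n : ℕ) : ∑ i ∈ range (n + 1), (-1 : ℚ) ^ i * n.choose i
    = if n = 0 then 1 else 0 := by
  have h := Int.alternating_sum_range_choose (n := n)
  have h2 : ((∑ m ∈ range (n + 1), ((-1) ^ m * n.choose m : ℤ) : ℤ) : ℚ)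
      = ((if n = 0 then 1 else 0 : ℤ) : ℚ) := by rw [h]
  push_cast at h2
  simpa using h2

lemma keySum (l j : ℕ) (hj : j ≤ l) :
    ∑ k ∈ Icc j l, (-1 : ℚ) ^ k * l.choose k * k.choose j
      = if l = j then (-1 : ℚ) ^ j else 0 := by
  rw [← Finset.Ico_add_one_right_eq_Icc, Finset.sum_Ico_eq_sum_range]
  have h : ∀ i ∈ range (l + 1 - j),
      (-1 : ℚ) ^ (j + i) * l.choose (j + i) * (j + i).choose j
      = (-1) ^ j * l.choose j * ((-1) ^ i * (l - j).choose i) := by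
    intro i hi
    simp only [mem_range] at hi
    have hle : j + i ≤ l := by omega
    have hcm := Nat.choose_mul (n := l) (k := j + i) (s := j) (by omega)
    have : (j + i) - j = i := by omega
    rw [this] at hcm
    have hq : (l.choose (j + i) : ℚ) * (j + i).choose j
        = l.choose j * (l - j).choose i := by exact_mod_cast hcm
    rw [pow_add]
    linear_combination ((-1:ℚ)^j * (-1)^i) * hq
  rw [Finset.sum_congr rfl h, ← Finset.mul_sum]
  have : l + 1 - j = (l - j) + 1 := by omega
  rw [this, altQ]
  rcases eq_or_ne l j with rfl | hne
  · simp
  · have : l - j ≠ 0 := by omega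
    simp [this, hne]

lemma keySum' (l j : ℕ) (hj : j ≤ l) :
    ∑ k ∈ Icc j l, (-1 : ℚ) ^ k * l.choose k * k.choose (j + 1)
      = if l = j + 1 then (-1 : ℚ) ^ (j + 1) else 0 := by
  rcases eq_or_lt_of_le hj with rfl | h
  · rw [Icc_self, sum_singleton, if_neg (by omega)]
    simp [Nat.choose_succ_self]
  · have h0 : ∑ k ∈ Icc (j + 1) l, (-1 : ℚ) ^ k * l.choose k * k.choose (j + 1)
        = ∑ k ∈ Icc j l, (-1 : ℚ) ^ k * l.choose k * k.choose (j + 1) := by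
      apply Finset.sum_subset (Finset.Icc_subset_Icc (by omega) le_rfl)
      intro x hx hx'
      simp only [mem_Icc] at hx hx'
      have : x = j := by omega
      subst this
      simp [Nat.choose_succ_self]
    rw [← h0, keySum l (j + 1) h]

lemma innerAux (k m' : ℕ) :
    (((k : ℚ) + 2) / ((k : ℚ) + 1)) * ((k + 1).choose (m' + 1) : ℚ)
      = (k.choose (m' + 1) : ℚ) + (1 + 1 / ((m' : ℚ) + 1)) * (k.choose m' : ℚ) := by
  have h1 : ((k : ℚ) + 1) * (k.choose m' : ℚ)
      = ((k + 1).choose (m' + 1) : ℚ) * ((m' : ℚ) + 1) := by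
    exact_mod_cast Nat.add_one_mul_choose_eq k m'
  have h2 : (((k + 1).choose (m' + 1) : ℕ) : ℚ)
      = (k.choose m' : ℚ) + (k.choose (m' + 1) : ℚ) := by
    exact_mod_cast Nat.choose_succ_succ' k m'
  have hk : (k : ℚ) + 1 ≠ 0 := by positivity
  have hm : (m' : ℚ) + 1 ≠ 0 := by positivity
  field_simp
  linear_combination (-1 : ℚ) * h1 + (((k : ℚ) + 1) * ((m' : ℚ) + 1)) * h2

theorem stmt_0 (l m : ℕ) (hm : 1 ≤ m) (hl : m - 1 ≤ l) :
    ∑ k ∈ Finset.Icc (m - 1) l,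
      (-1 : ℚ) ^ (k + m) * (((k : ℚ) + 2) / ((k : ℚ) + 1)) * (l.choose k : ℚ) *
        ((k + 1).choose m : ℚ) =
    if m < l then 0 else if l = m then 1 else -1 - 1 / ((l : ℚ) + 1) := by
  obtain ⟨m', rfl⟩ : ∃ m', m = m' + 1 := ⟨m - 1, by omega⟩
  simp only [Nat.add_sub_cancel] at hl ⊢
  have hsplit : ∀ k ∈ Icc m' l,
      (-1 : ℚ) ^ (k + (m' + 1)) * (((k : ℚ) + 2) / ((k : ℚ) + 1)) * (l.choose k : ℚ) *
          ((k + 1).choose (m' + 1) : ℚ)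
      = (-1 : ℚ) ^ (m' + 1) * ((-1) ^ k * l.choose k * k.choose (m' + 1))
        + ((1 + 1 / ((m' : ℚ) + 1)) * (-1 : ℚ) ^ (m' + 1))
            * ((-1) ^ k * l.choose k * k.choose m') := by
    intro k _
    rw [pow_add]
    linear_combination ((-1 : ℚ) ^ k * (-1 : ℚ) ^ (m' + 1) * (l.choose k : ℚ)) * innerAux k m'
  rw [Finset.sum_congr rfl hsplit, Finset.sum_add_distrib, ← Finset.mul_sum, ← Finset.mul_sum,
    keySum l m' hl, keySum' l m' hl]
  have e1 : (-1 : ℚ) ^ (m' + 1) * (-1 : ℚ) ^ (m' + 1) = 1 := by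
    rw [← pow_add]; exact Even.neg_one_pow ⟨m' + 1, rfl⟩
  have e2 : (-1 : ℚ) ^ (m' + 1) * (-1 : ℚ) ^ m' = -1 := by
    rw [← pow_add]; exact Odd.neg_one_pow ⟨m', by ring⟩
  rcases eq_or_lt_of_le hl with rfl | h
  · rw [if_neg (show ¬ m' = m' + 1 by omega), if_pos rfl,
      if_neg (show ¬ m' + 1 < m' by omega), if_neg (show ¬ m' = m' + 1 by omega)]
    linear_combination (1 + 1 / ((m' : ℚ) + 1)) * e2
  · rcases eq_or_lt_of_le (by omega : m' + 1 ≤ l) with rfl | h2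
    · rw [if_pos rfl, if_neg (show ¬ m' + 1 = m' by omega),
        if_neg (show ¬ m' + 1 < m' + 1 by omega), if_pos rfl]
      linear_combination e1
    · rw [if_neg (show ¬ l = m' + 1 by omega), if_neg (show ¬ l = m' by omega),
        if_pos (show m' + 1 < l by omega)]
      ring
end

section
/- For all natural numbers l, m with l ≥ m ≥ 0: ∑_{k=m+1}^{l+1} (-1)^{k+m} · C(l+1,k) · [ (1-(2k+1)(m+2)) · ((2m+2)/(2k+1)) · C(k,m+1) + (1-(2k+1)(m+1)) · ((2m+1)/(2k+1)) · C(k,m) ] + (1-(2m+1)(m+1)) · C(l+1,m) equals 0 if l > m, and equals 2(l+1)(l+2) if l = m. -/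
open Finset

lemma alt_choose_sum (n m : ℕ) (h : m ≤ n) :
    ∑ k ∈ Finset.Icc m n, (-1 : ℚ) ^ (k + m) * ((n.choose k : ℚ)) * (k.choose m : ℚ)
      = if m = n then 1 else 0 := by
  rw [← Finset.Ico_add_one_right_eq_Icc, Finset.sum_Ico_eq_sum_range]
  have hstep : ∀ j ∈ Finset.range (n + 1 - m),
      (-1 : ℚ) ^ (m + j + m) * ((n.choose (m + j) : ℚ)) * ((m + j).choose m : ℚ)
        = (n.choose m : ℚ) * ((-1 : ℚ) ^ j * ((n - m).choose j : ℚ)) := by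
    intro j hj
    have hmj : m + j ≤ n := by
      simp only [Finset.mem_range] at hj; omega
    have hc := Nat.choose_mul (n := n) (Nat.le_add_right m j)
    have hc' : ((n.choose (m + j) : ℚ)) * ((m + j).choose m : ℚ)
        = (n.choose m : ℚ) * ((n - m).choose j : ℚ) := by
      have : (m + j) - m = j := by omega
      exact_mod_cast congrArg (Nat.cast (R := ℚ)) (this ▸ hc)
    have hsgn : (-1 : ℚ) ^ (m + j + m) = (-1 : ℚ) ^ j := by
      rw [show m + j + m = 2 * m + j by ring, pow_add, pow_mul]
      simp
    rw [mul_assoc, hc', hsgn]; ring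
  rw [Finset.sum_congr rfl hstep, ← Finset.mul_sum]
  have halt : ∑ j ∈ Finset.range (n + 1 - m), (-1 : ℚ) ^ j * ((n - m).choose j : ℚ)
      = if n - m = 0 then 1 else 0 := by
    have : n + 1 - m = (n - m) + 1 := by omega
    rw [this]
    have h := Int.alternating_sum_range_choose (n := n - m)
    have h2 := congrArg (fun z : ℤ => (z : ℚ)) h
    push_cast at h2
    rw [h2]

  rw [halt]
  by_cases hmn : m = n
  · simp [hmn]
  · have : n - m ≠ 0 := by omega
    simp [hmn, this]

theorem stmt_1 (l m : ℕ) (hml : m ≤ l) :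
    (∑ k ∈ Finset.Icc (m + 1) (l + 1),
      (-1 : ℚ) ^ (k + m) * ((l + 1).choose k : ℚ) *
        ((1 - (2 * (k : ℚ) + 1) * ((m : ℚ) + 2)) * ((2 * (m : ℚ) + 2) / (2 * (k : ℚ) + 1)) *
            (k.choose (m + 1) : ℚ) +
          (1 - (2 * (k : ℚ) + 1) * ((m : ℚ) + 1)) * ((2 * (m : ℚ) + 1) / (2 * (k : ℚ) + 1)) *
            (k.choose m : ℚ))) +
      (1 - (2 * (m : ℚ) + 1) * ((m : ℚ) + 1)) * ((l + 1).choose m : ℚ) =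
    if m < l then 0 else 2 * ((l : ℚ) + 1) * ((l : ℚ) + 2) := by
  -- Step 1: simplify the summand
  have hstep : ∀ k ∈ Finset.Icc (m + 1) (l + 1),
      (-1 : ℚ) ^ (k + m) * ((l + 1).choose k : ℚ) *
        ((1 - (2 * (k : ℚ) + 1) * ((m : ℚ) + 2)) * ((2 * (m : ℚ) + 2) / (2 * (k : ℚ) + 1)) *
            (k.choose (m + 1) : ℚ) +
          (1 - (2 * (k : ℚ) + 1) * ((m : ℚ) + 1)) * ((2 * (m : ℚ) + 1) / (2 * (k : ℚ) + 1)) *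
            (k.choose m : ℚ))
      = (1 - ((m : ℚ) + 1) * (2 * (m : ℚ) + 1)) *
          ((-1 : ℚ) ^ (k + m) * ((l + 1).choose k : ℚ) * (k.choose m : ℚ))
        - 2 * ((m : ℚ) + 1) * ((m : ℚ) + 2) *
          ((-1 : ℚ) ^ (k + m) * ((l + 1).choose k : ℚ) * (k.choose (m + 1) : ℚ)) := by
    intro k hk
    simp only [Finset.mem_Icc] at hk
    obtain ⟨hk1, hk2⟩ := hk
    have hkpos : (2 * (k : ℚ) + 1) ≠ 0 := by positivity
    -- key identity: (2m+2)*C(k,m+1) + (2m+1)*C(k,m) = (2k+1)*C(k,m)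
    have hid : (2 * (m : ℚ) + 2) * (k.choose (m + 1) : ℚ)
        + (2 * (m : ℚ) + 1) * (k.choose m : ℚ) = (2 * (k : ℚ) + 1) * (k.choose m : ℚ) := by
      have h1 := Nat.choose_succ_right_eq k m
      have hmk : m ≤ k := by omega
      have h1' : (k.choose (m + 1) : ℚ) * ((m : ℚ) + 1)
          = (k.choose m : ℚ) * ((k : ℚ) - (m : ℚ)) := by
        have := congrArg (Nat.cast (R := ℚ)) h1
        push_cast [Nat.cast_sub hmk] at this
        convert this using 2
      nlinarith [h1']
    field_simp
    linear_combination ((l + 1).choose k : ℚ) * hid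
  rw [Finset.sum_congr rfl hstep, Finset.sum_sub_distrib, ← Finset.mul_sum, ← Finset.mul_sum]
  -- Step 2: evaluate the two alternating sums
  have hS2 : ∑ k ∈ Finset.Icc (m + 1) (l + 1),
      (-1 : ℚ) ^ (k + m) * ((l + 1).choose k : ℚ) * (k.choose (m + 1) : ℚ)
      = -(if m = l then 1 else 0) := by
    have h := alt_choose_sum (l + 1) (m + 1) (by omega)
    have hsgn : ∀ k, (-1 : ℚ) ^ (k + (m + 1)) = -(-1 : ℚ) ^ (k + m) := by
      intro k; rw [show k + (m + 1) = (k + m) + 1 by ring, pow_succ]; ring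
    have hrw : ∑ k ∈ Finset.Icc (m + 1) (l + 1),
        (-1 : ℚ) ^ (k + (m + 1)) * ((l + 1).choose k : ℚ) * (k.choose (m + 1) : ℚ)
        = -∑ k ∈ Finset.Icc (m + 1) (l + 1),
            (-1 : ℚ) ^ (k + m) * ((l + 1).choose k : ℚ) * (k.choose (m + 1) : ℚ) := by
      rw [← Finset.sum_neg_distrib]
      exact Finset.sum_congr rfl fun k _ => by rw [hsgn k]; ring
    rw [hrw] at h
    have heq : (if m + 1 = l + 1 then (1 : ℚ) else 0) = if m = l then 1 else 0 := by
      simp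
    rw [heq] at h
    linarith
  have hS1 : ∑ k ∈ Finset.Icc (m + 1) (l + 1),
      (-1 : ℚ) ^ (k + m) * ((l + 1).choose k : ℚ) * (k.choose m : ℚ)
      = -((l + 1).choose m : ℚ) := by
    have h := alt_choose_sum (l + 1) m (by omega)
    have hins : Finset.Icc m (l + 1) = insert m (Finset.Icc (m + 1) (l + 1)) := by
      ext x
      simp only [Finset.mem_Icc, Finset.mem_insert]
      omega
    rw [hins, Finset.sum_insert (by simp)] at h
    have hterm : (-1 : ℚ) ^ (m + m) * ((l + 1).choose m : ℚ) * (m.choose m : ℚ)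
        = ((l + 1).choose m : ℚ) := by
      rw [show m + m = 2 * m by ring, pow_mul]
      simp
    rw [hterm] at h
    have hne : ¬ (m = l + 1) := by omega
    rw [if_neg hne] at h
    linarith
  rw [hS1, hS2]
  by_cases hlt : m < l
  · rw [if_pos hlt, if_neg (by omega)]
    ring
  · have hml' : m = l := by omega
    rw [if_neg hlt, if_pos hml']
    subst hml'
    push_cast
    ring
end

section
/- Let l be a natural number, C₀ ∈ ℝ, and define r(θ) = C₂ + C₁ cosθ - 2C₀ ∑_{k=0}^{l} ((-1)^k / ((2k+1)(2k+2))) · C(l,k) · cos^{2k+2}θ. Then -(1/2) sinθ · d/dθ( (1/sinθ) · dr/dθ ) = C₀ sin^{2l+2}θ for all θ ∈ (0,π). -/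
open Real Set Finset

theorem stmt_5 (l : ℕ) (C₀ C₁ C₂ : ℝ) (r : ℝ → ℝ)
    (hr : ∀ θ, r θ = C₂ + C₁ * Real.cos θ -
      2 * C₀ * ∑ k ∈ Finset.range (l + 1),
        ((-1 : ℝ) ^ k / ((2 * (k : ℝ) + 1) * (2 * (k : ℝ) + 2))) * (l.choose k : ℝ) *
          Real.cos θ ^ (2 * k + 2)) :
    ∀ θ ∈ Set.Ioo 0 Real.pi,
      -(1 / 2) * Real.sin θ * deriv (fun x => (1 / Real.sin x) * deriv r x) θ =
        C₀ * Real.sin θ ^ (2 * l + 2) := by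
  set g : ℝ → ℝ := fun x => -C₁ + 2 * C₀ * ∑ k ∈ Finset.range (l + 1),
      ((-1 : ℝ) ^ k / (2 * (k : ℝ) + 1)) * (l.choose k : ℝ) * Real.cos x ^ (2 * k + 1)
    with hgdef
  have hr' : ∀ x, HasDerivAt r (Real.sin x * g x) x := by
    intro x
    have h0 : r = fun y => C₂ + C₁ * Real.cos y -
        2 * C₀ * ∑ k ∈ Finset.range (l + 1),
          ((-1 : ℝ) ^ k / ((2 * (k : ℝ) + 1) * (2 * (k : ℝ) + 2))) * (l.choose k : ℝ) *
            Real.cos y ^ (2 * k + 2) := funext hr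
    rw [h0]
    have hsum : HasDerivAt (fun y => ∑ k ∈ Finset.range (l + 1),
        ((-1 : ℝ) ^ k / ((2 * (k : ℝ) + 1) * (2 * (k : ℝ) + 2))) * (l.choose k : ℝ) *
          Real.cos y ^ (2 * k + 2))
        (∑ k ∈ Finset.range (l + 1),
          -(Real.sin x * (((-1 : ℝ) ^ k / (2 * (k : ℝ) + 1)) * (l.choose k : ℝ) *
            Real.cos x ^ (2 * k + 1)))) x := by
      apply HasDerivAt.fun_sum
      intro k hk
      have hc : HasDerivAt (fun y => Real.cos y ^ (2 * k + 2))
          (((2 * k + 2 : ℕ) : ℝ) * Real.cos x ^ (2 * k + 2 - 1) * (-Real.sin x)) x :=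
        (Real.hasDerivAt_cos x).pow _
      have h := hc.const_mul
        (((-1 : ℝ) ^ k / ((2 * (k : ℝ) + 1) * (2 * (k : ℝ) + 2))) * (l.choose k : ℝ))
      refine h.congr_deriv ?_
      have h1 : (2 * (k : ℝ) + 1) ≠ 0 := by positivity
      have h2 : (2 * (k : ℝ) + 2) ≠ 0 := by positivity
      have h3 : 2 * k + 2 - 1 = 2 * k + 1 := by omega
      rw [h3]
      push_cast
      field_simp
    have hd := ((hasDerivAt_const x C₂).add ((Real.hasDerivAt_cos x).const_mul C₁)).sub
      (hsum.const_mul (2 * C₀))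
    have hgx : Real.sin x * g x = 0 + C₁ * (-Real.sin x) -
        2 * C₀ * ∑ k ∈ Finset.range (l + 1),
          -(Real.sin x * (((-1 : ℝ) ^ k / (2 * (k : ℝ) + 1)) * (l.choose k : ℝ) *
            Real.cos x ^ (2 * k + 1))) := by
      rw [hgdef]
      simp only [Finset.sum_neg_distrib, ← Finset.mul_sum]
      ring
    rw [hgx]
    exact hd
  have hg' : ∀ x, HasDerivAt g
      (2 * C₀ * (-(Real.sin x) * ∑ k ∈ Finset.range (l + 1),
        (-1 : ℝ) ^ k * (l.choose k : ℝ) * Real.cos x ^ (2 * k))) x := by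
    intro x
    have hsum : HasDerivAt (fun y => ∑ k ∈ Finset.range (l + 1),
        ((-1 : ℝ) ^ k / (2 * (k : ℝ) + 1)) * (l.choose k : ℝ) * Real.cos y ^ (2 * k + 1))
        (∑ k ∈ Finset.range (l + 1),
          -(Real.sin x) * ((-1 : ℝ) ^ k * (l.choose k : ℝ) * Real.cos x ^ (2 * k))) x := by
      apply HasDerivAt.fun_sum
      intro k hk
      have hc : HasDerivAt (fun y => Real.cos y ^ (2 * k + 1))
          (((2 * k + 1 : ℕ) : ℝ) * Real.cos x ^ (2 * k + 1 - 1) * (-Real.sin x)) x :=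
        (Real.hasDerivAt_cos x).pow _
      have h := hc.const_mul (((-1 : ℝ) ^ k / (2 * (k : ℝ) + 1)) * (l.choose k : ℝ))
      refine h.congr_deriv ?_
      have h1 : (2 * (k : ℝ) + 1) ≠ 0 := by positivity
      have h3 : 2 * k + 1 - 1 = 2 * k := by omega
      rw [h3]
      push_cast
      field_simp
    have hd := (hasDerivAt_const x (-C₁)).fun_add (hsum.const_mul (2 * C₀))
    rw [hgdef]
    refine hd.congr_deriv ?_
    rw [← Finset.mul_sum]
    ring
  intro θ hθ
  obtain ⟨hθ0, hθπ⟩ := hθ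
  have hsin : Real.sin θ > 0 := Real.sin_pos_of_pos_of_lt_pi hθ0 hθπ
  have heq : (fun x => (1 / Real.sin x) * deriv r x) =ᶠ[nhds θ] g := by
    have hopen : Set.Ioo (0 : ℝ) Real.pi ∈ nhds θ :=
      (isOpen_Ioo).mem_nhds ⟨hθ0, hθπ⟩
    filter_upwards [hopen] with x hx
    have hsx : Real.sin x ≠ 0 :=
      ne_of_gt (Real.sin_pos_of_pos_of_lt_pi hx.1 hx.2)
    rw [(hr' x).deriv]
    field_simp
  have hderiv : deriv (fun x => (1 / Real.sin x) * deriv r x) θ = deriv g θ :=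
    heq.deriv_eq
  rw [hderiv, (hg' θ).deriv]
  have hbin : ∑ k ∈ Finset.range (l + 1),
      (-1 : ℝ) ^ k * (l.choose k : ℝ) * Real.cos θ ^ (2 * k) = (Real.sin θ ^ 2) ^ l := by
    have hs : Real.sin θ ^ 2 = -Real.cos θ ^ 2 + 1 := by
      have := Real.sin_sq_add_cos_sq θ
      linarith
    rw [hs, add_pow]
    apply Finset.sum_congr rfl
    intro k hk
    rw [one_pow, neg_pow, pow_mul]
    ring
  rw [hbin]
  have : Real.sin θ ^ (2 * l + 2) = (Real.sin θ ^ 2) ^ l * Real.sin θ ^ 2 := by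
    rw [← pow_mul, ← pow_add]
  rw [this]
  ring
end

section
/- Let ψ, s : (0,π) → ℝ be smooth with s(θ) = C₀ sin^{2/(μ-1)}θ and ψ(θ) = ψ∞ - μ C₀ sin^{2/(μ-1)}θ for constants μ > 1, ψ∞, C₀ ∈ ℝ. Then the pair (ψ, s) satisfies both the linear Hopf relation ψ + μ s = ψ∞ and the Codazzi–Mainardi equation d/dθ(ψ + s) + 2 cotθ · s = 0. -/
open Real Set

theorem stmt_7 (μ ψinf C₀ : ℝ) (hμ : 1 < μ) (s ψ : ℝ → ℝ)
    (hs : ∀ θ, s θ = C₀ * Real.sin θ ^ ((2 : ℝ) / (μ - 1)))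
    (hψ : ∀ θ, ψ θ = ψinf - μ * C₀ * Real.sin θ ^ ((2 : ℝ) / (μ - 1))) :
    ∀ θ ∈ Set.Ioo 0 Real.pi,
      ψ θ + μ * s θ = ψinf ∧
      deriv (fun x => ψ x + s x) θ + 2 * (Real.cos θ / Real.sin θ) * s θ = 0 := by
  intro θ hθ
  have hsin : 0 < Real.sin θ := Real.sin_pos_of_pos_of_lt_pi hθ.1 hθ.2
  set p : ℝ := 2 / (μ - 1) with hp
  have hμ1 : μ - 1 ≠ 0 := by linarith
  constructor
  · rw [hψ, hs]; ring
  · have hf : HasDerivAt (fun x => Real.sin x ^ p)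
        (p * Real.sin θ ^ (p - 1) * Real.cos θ) θ := by
      have := (Real.hasDerivAt_sin θ).rpow_const (p := p) (Or.inl hsin.ne')
      simpa [mul_comm, mul_assoc, mul_left_comm] using this
    have hD : HasDerivAt (fun x => ψ x + s x)
        ((1 - μ) * C₀ * (p * Real.sin θ ^ (p - 1) * Real.cos θ)) θ := by
      have h : (fun x => ψ x + s x)
          = fun x => ψinf + (1 - μ) * C₀ * (Real.sin x ^ p) := by
        funext x; rw [hψ, hs]; ring
      rw [h]
      simpa using ((hf.const_mul ((1 - μ) * C₀)).const_add ψinf)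
    rw [hD.deriv, hs]
    have hsplit : Real.sin θ ^ p = Real.sin θ ^ (p - 1) * Real.sin θ := by
      rw [← Real.rpow_add_one hsin.ne']; ring_nf
    have hpmul : (1 - μ) * p = -2 := by
      rw [hp]; field_simp; ring
    rw [hsplit]
    field_simp
    linear_combination (C₀ * Real.sin θ ^ (p - 1) * Real.cos θ) * hpmul
end

section
/- Suppose ψ, s : (0,π) → ℝ are C¹, s never vanishes, they satisfy ψ + μ s = ψ∞ for constants μ > 1, ψ∞, and the Codazzi–Mainardi equation d/dθ(ψ+s) + 2 cotθ · s = 0. Then there exists C₀ ≠ 0 such that s(θ) = C₀ sin^{2/(μ-1)}θ for all θ ∈ (0,π). -/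
open Real Set

theorem stmt_8 (μ ψinf : ℝ) (hμ : 1 < μ) (ψ s : ℝ → ℝ)
    (hψC1 : ContDiffOn ℝ 1 ψ (Set.Ioo 0 Real.pi))
    (hsC1 : ContDiffOn ℝ 1 s (Set.Ioo 0 Real.pi))
    (hs0 : ∀ θ ∈ Set.Ioo 0 Real.pi, s θ ≠ 0)
    (hlin : ∀ θ ∈ Set.Ioo 0 Real.pi, ψ θ + μ * s θ = ψinf)
    (hCM : ∀ θ ∈ Set.Ioo 0 Real.pi,
      deriv (fun x => ψ x + s x) θ + 2 * (Real.cos θ / Real.sin θ) * s θ = 0) :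
    ∃ C₀ : ℝ, C₀ ≠ 0 ∧ ∀ θ ∈ Set.Ioo 0 Real.pi,
      s θ = C₀ * Real.sin θ ^ ((2 : ℝ) / (μ - 1)) := by
  have hopen : IsOpen (Set.Ioo (0:ℝ) Real.pi) := isOpen_Ioo
  set k : ℝ := 2 / (μ - 1) with hk
  have hμ1 : μ - 1 ≠ 0 := by intro h; linarith [hμ]
  have hsdiff : ∀ θ ∈ Set.Ioo 0 Real.pi, DifferentiableAt ℝ s θ := fun θ hθ =>
    ((hsC1.differentiableOn one_ne_zero).differentiableAt (hopen.mem_nhds hθ))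
  have hsin : ∀ θ ∈ Set.Ioo 0 Real.pi, 0 < Real.sin θ := fun θ hθ =>
    Real.sin_pos_of_pos_of_lt_pi hθ.1 hθ.2
  -- derivative of s
  have hsderiv : ∀ θ ∈ Set.Ioo 0 Real.pi,
      HasDerivAt s (k * (Real.cos θ / Real.sin θ) * s θ) θ := by
    intro θ hθ
    have hd := (hsdiff θ hθ).hasDerivAt
    have heq : (fun x => ψ x + s x) =ᶠ[nhds θ] (fun x => ψinf + (1 - μ) * s x) := by
      filter_upwards [hopen.mem_nhds hθ] with x hx
      have := hlin x hx
      ring_nf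
      linarith
    have hderiv2 : deriv (fun x => ψ x + s x) θ = (1 - μ) * deriv s θ := by
      rw [heq.deriv_eq]
      rw [deriv_const_add, deriv_const_mul _ (hsdiff θ hθ)]
    have hcm := hCM θ hθ
    rw [hderiv2] at hcm
    have : deriv s θ = k * (Real.cos θ / Real.sin θ) * s θ := by
      rw [hk, div_mul_eq_mul_div, div_mul_eq_mul_div, eq_div_iff hμ1]
      linarith
    rwa [this] at hd
  -- F has zero derivative
  set F : ℝ → ℝ := fun θ => s θ * Real.sin θ ^ (-k) with hF
  have hFderiv : ∀ θ ∈ Set.Ioo 0 Real.pi, HasDerivAt F 0 θ := by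
    intro θ hθ
    have hsθ := hsin θ hθ
    have hpow : HasDerivAt (fun x => Real.sin x ^ (-k))
        (Real.cos θ * -k * Real.sin θ ^ (-k - 1)) θ :=
      (Real.hasDerivAt_sin θ).rpow_const (Or.inl hsθ.ne')
    have hprod := (hsderiv θ hθ).mul hpow
    have : k * (Real.cos θ / Real.sin θ) * s θ * Real.sin θ ^ (-k) +
        s θ * (Real.cos θ * -k * Real.sin θ ^ (-k - 1)) = 0 := by
      have h1 : Real.sin θ ^ (-k - 1) = Real.sin θ ^ (-k) / Real.sin θ := by
        rw [Real.rpow_sub hsθ, Real.rpow_one]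
      rw [h1]
      field_simp
      ring
    rwa [this] at hprod
  -- F is constant
  have hmem : Real.pi / 2 ∈ Set.Ioo 0 Real.pi := by
    constructor
    · positivity
    · linarith [Real.pi_pos]
  have hFconst : ∀ θ ∈ Set.Ioo 0 Real.pi, F θ = F (Real.pi / 2) := by
    intro θ hθ
    refine (convex_Ioo (0:ℝ) Real.pi).is_const_of_fderivWithin_eq_zero (𝕜 := ℝ)
      (fun x hx => ((hFderiv x hx).differentiableAt).differentiableWithinAt) ?_ hθ hmem
    intro x hx
    rw [fderivWithin_eq_fderiv (hopen.uniqueDiffOn x hx) (hFderiv x hx).differentiableAt,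
      (hFderiv x hx).hasFDerivAt.fderiv]
    ext
    simp
  refine ⟨s (Real.pi / 2), hs0 _ hmem, ?_⟩
  have hFval : F (Real.pi / 2) = s (Real.pi / 2) := by
    simp [hF, Real.sin_pi_div_two, Real.one_rpow]
  intro θ hθ
  have hc := hFconst θ hθ
  rw [hFval] at hc
  have hsθ := hsin θ hθ
  have hne : Real.sin θ ^ k ≠ 0 := (Real.rpow_pos_of_pos hsθ k).ne'
  have : s θ * Real.sin θ ^ (-k) = s (Real.pi / 2) := hc
  rw [Real.rpow_neg hsθ.le, mul_inv_eq_iff_eq_mul₀ hne] at this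
  exact this
end

section
/- Let l ∈ ℕ, and suppose s : (0,π) → ℝ satisfies s(θ) = (a + b cosθ) sin^{2l+2}θ + O(sin^{2l+4}θ) near θ = 0, where ψ is determined via the Codazzi–Mainardi relation with dψ/dθ = -2(l+2)(b + a cosθ) sin^{2l+1}θ + O(sin^{2l+3}θ) and ds/dθ = 2(l+1)(b + a cosθ) sin^{2l+1}θ + O(sin^{2l+3}θ). If a ≠ ±b (non-degeneracy), then the slope at the umbilic point, μ_N = lim_{θ→0} (ψ(0) - ψ(θ))/s(θ), equals 1 + 1/(l+1). -/
open Real Set Filter Asymptotics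

theorem stmt_11 (l : ℕ) (a b : ℝ) (hab : a ≠ b) (hab' : a ≠ -b) (s ψ : ℝ → ℝ)
    (hsC : ContDiff ℝ 1 s) (hψC : ContDiff ℝ 1 ψ)
    (hs : (fun θ => s θ - (a + b * Real.cos θ) * Real.sin θ ^ (2 * l + 2)) =O[nhdsWithin 0 (Set.Ioi 0)]
      fun θ => Real.sin θ ^ (2 * l + 4))
    (hψ' : (fun θ => deriv ψ θ -
        (-(2 * ((l : ℝ) + 2)) * (b + a * Real.cos θ) * Real.sin θ ^ (2 * l + 1))) =O[nhdsWithin 0 (Set.Ioi 0)]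
      fun θ => Real.sin θ ^ (2 * l + 3))
    (hs' : (fun θ => deriv s θ -
        (2 * ((l : ℝ) + 1) * (b + a * Real.cos θ) * Real.sin θ ^ (2 * l + 1))) =O[nhdsWithin 0 (Set.Ioi 0)]
      fun θ => Real.sin θ ^ (2 * l + 3)) :
    Filter.Tendsto (fun θ => (ψ 0 - ψ θ) / s θ) (nhdsWithin 0 (Set.Ioi 0))
      (nhds (1 + 1 / ((l : ℝ) + 1))) := by
  have hba : b + a ≠ 0 := fun h => hab' (by linarith)
  -- eventually sin θ > 0
  have hsinpos : ∀ᶠ θ in nhdsWithin 0 (Set.Ioi 0), 0 < Real.sin θ := by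
    filter_upwards [Ioo_mem_nhdsGT_of_mem (show (0:ℝ) ∈ Set.Ico 0 π from ⟨le_refl _, Real.pi_pos⟩)]
      with θ hθ
    exact Real.sin_pos_of_pos_of_lt_pi hθ.1 hθ.2
  -- sin^{m} → 0 for m ≥ 1
  have hsin0 : Filter.Tendsto Real.sin (nhdsWithin 0 (Set.Ioi 0)) (nhds 0) := by
    simpa using (Real.continuous_sin.tendsto 0).mono_left nhdsWithin_le_nhds
  -- Key lemma: if f - c*(b+a cos)*sin^{2l+1} = O(sin^{2l+3}) then f/sin^{2l+1} → c*(b+a)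
  have key : ∀ (c : ℝ) (f : ℝ → ℝ),
      ((fun θ => f θ - c * (b + a * Real.cos θ) * Real.sin θ ^ (2 * l + 1))
        =O[nhdsWithin 0 (Set.Ioi 0)] fun θ => Real.sin θ ^ (2 * l + 3)) →
      Filter.Tendsto (fun θ => f θ / Real.sin θ ^ (2 * l + 1)) (nhdsWithin 0 (Set.Ioi 0))
        (nhds (c * (b + a))) := by
    intro c f hf
    have h1 : Filter.Tendsto
        (fun θ => (f θ - c * (b + a * Real.cos θ) * Real.sin θ ^ (2 * l + 1)) /
          Real.sin θ ^ (2 * l + 1)) (nhdsWithin 0 (Set.Ioi 0)) (nhds 0) := by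
      have hO := hf.mul (isBigO_refl (fun θ => (Real.sin θ ^ (2 * l + 1))⁻¹)
        (nhdsWithin 0 (Set.Ioi 0)))
      have hO2 : (fun θ => (f θ - c * (b + a * Real.cos θ) * Real.sin θ ^ (2 * l + 1)) /
          Real.sin θ ^ (2 * l + 1)) =O[nhdsWithin 0 (Set.Ioi 0)]
          fun θ => Real.sin θ ^ 2 := by
        refine hO.congr' (by filter_upwards with θ; rw [div_eq_mul_inv]) ?_
        filter_upwards [hsinpos] with θ hθ
        have hne : Real.sin θ ^ (2 * l + 1) ≠ 0 := pow_ne_zero _ (ne_of_gt hθ)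
        field_simp
        ring
      exact hO2.trans_tendsto (by simpa using (hsin0.pow 2))
    have h2 : Filter.Tendsto (fun θ => c * (b + a * Real.cos θ)) (nhdsWithin 0 (Set.Ioi 0))
        (nhds (c * (b + a))) := by
      have : Filter.Tendsto (fun θ => c * (b + a * Real.cos θ)) (nhds 0)
          (nhds (c * (b + a * Real.cos 0))) := by
        exact (continuous_const.mul (continuous_const.add
          (continuous_const.mul Real.continuous_cos))).tendsto 0
      simpa using this.mono_left nhdsWithin_le_nhds
    have := h1.add h2
    rw [zero_add] at this
    refine this.congr' ?_
    filter_upwards [hsinpos] with θ hθ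
    have hne : Real.sin θ ^ (2 * l + 1) ≠ 0 := pow_ne_zero _ (ne_of_gt hθ)
    field_simp
    ring
  have Tψ := key (-(2 * ((l : ℝ) + 2))) (deriv ψ) hψ'
  have Ts := key (2 * ((l : ℝ) + 1)) (deriv s) hs'
  have hL : (2 * ((l : ℝ) + 1)) * (b + a) ≠ 0 := by
    apply mul_ne_zero _ hba
    positivity
  -- eventually deriv s ≠ 0
  have hg' : ∀ᶠ θ in nhdsWithin 0 (Set.Ioi 0), deriv s θ ≠ 0 := by
    filter_upwards [Ts.eventually_ne hL, hsinpos] with θ h1 h2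
    intro h
    apply h1
    rw [h, zero_div]
  -- f → 0
  have hfa : Filter.Tendsto (fun θ => ψ 0 - ψ θ) (nhdsWithin 0 (Set.Ioi 0)) (nhds 0) := by
    have h : Filter.Tendsto ψ (nhdsWithin 0 (Set.Ioi 0)) (nhds (ψ 0)) :=
      (hψC.continuous.tendsto 0).mono_left nhdsWithin_le_nhds
    simpa using h.const_sub (ψ 0)
  -- s → 0
  have hga : Filter.Tendsto s (nhdsWithin 0 (Set.Ioi 0)) (nhds 0) := by
    have h1 : Filter.Tendsto
        (fun θ => s θ - (a + b * Real.cos θ) * Real.sin θ ^ (2 * l + 2))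
        (nhdsWithin 0 (Set.Ioi 0)) (nhds 0) :=
      hs.trans_tendsto (by simpa using (hsin0.pow (2 * l + 4)))
    have h2 : Filter.Tendsto (fun θ => (a + b * Real.cos θ) * Real.sin θ ^ (2 * l + 2))
        (nhdsWithin 0 (Set.Ioi 0)) (nhds 0) := by
      have hc : Continuous (fun θ : ℝ => (a + b * Real.cos θ) * Real.sin θ ^ (2 * l + 2)) :=
        (continuous_const.add (continuous_const.mul Real.continuous_cos)).mul
          (Real.continuous_sin.pow (2 * l + 2))
      simpa using (hc.tendsto 0).mono_left nhdsWithin_le_nhds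
    have := h1.add h2
    rw [zero_add] at this
    exact this.congr (fun θ => by ring)
  -- ratio of derivatives
  have hdiv : Filter.Tendsto (fun θ => deriv (fun t => ψ 0 - ψ t) θ / deriv s θ)
      (nhdsWithin 0 (Set.Ioi 0)) (nhds (1 + 1 / ((l : ℝ) + 1))) := by
    have hder : ∀ θ, deriv (fun t => ψ 0 - ψ t) θ = -deriv ψ θ := by
      intro θ
      rw [deriv_const_sub]
    have hratio := (Tψ.neg.div Ts hL)
    have heq : -(-(2 * ((l : ℝ) + 2)) * (b + a)) / (2 * ((l : ℝ) + 1) * (b + a))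
        = 1 + 1 / ((l : ℝ) + 1) := by
      have hl1 : ((l : ℝ) + 1) ≠ 0 := by positivity
      field_simp
      ring
    rw [heq] at hratio
    refine hratio.congr' ?_
    filter_upwards [hsinpos] with θ hθ
    have hne : Real.sin θ ^ (2 * l + 1) ≠ 0 := pow_ne_zero _ (ne_of_gt hθ)
    simp only [Pi.div_apply]
    rw [hder, ← neg_div, div_div_div_cancel_right₀ hne]
  exact deriv.lhopital_zero_nhdsGT
    (Filter.Eventually.of_forall fun θ =>
      ((hψC.differentiable one_ne_zero θ).const_sub (ψ 0)))
    hg' hfa hga hdiv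
end

section
/- Define s(t,θ) = [a₀ + (2/3)a₁(1-e^{-3t}) + (b₀ e^{-t} + (2/5) b₁ (e^{-t} - e^{-6t})) cosθ] sin²θ + (a₁ e^{-3t} + b₁ e^{-6t} cosθ) sin⁴θ. Then s satisfies, for all t > 0 and θ ∈ (0,π), the PDE ∂s/∂t = (1/(2sinθ)) ∂/∂θ(sinθ ∂s/∂θ) - 2 cotθ ∂s/∂θ + ((1+cos²θ)/sin²θ) s, with initial condition s(0,θ) = (a₀+b₀cosθ) sin²θ + (a₁+b₁cosθ) sin⁴θ. -/
open Real Set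

private lemma aux_theta (A B C D x : ℝ) :
    HasDerivAt (fun y => (A + B * Real.cos y) * Real.sin y ^ 2 +
        (C + D * Real.cos y) * Real.sin y ^ 4)
      (2*A*Real.sin x*Real.cos x + B*(2*Real.sin x*Real.cos x^2 - Real.sin x^3) +
        4*C*Real.sin x^3*Real.cos x + D*(4*Real.sin x^3*Real.cos x^2 - Real.sin x^5)) x := by
  have h := (((hasDerivAt_const x A).add ((hasDerivAt_const x B).mul (Real.hasDerivAt_cos x))).mul
      ((Real.hasDerivAt_sin x).pow 2)).add
    (((hasDerivAt_const x C).add ((hasDerivAt_const x D).mul (Real.hasDerivAt_cos x))).mul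
      ((Real.hasDerivAt_sin x).pow 4))
  refine h.congr_deriv ?_
  simp only [Pi.add_apply, Pi.sub_apply, Pi.mul_apply, Pi.pow_apply]
  norm_num
  ring

private lemma aux_g (A B C D x : ℝ) :
    HasDerivAt (fun y => 2*A*(Real.sin y^2*Real.cos y) + 2*B*(Real.sin y^2*Real.cos y^2)
        - B*Real.sin y^4 + 4*C*(Real.sin y^4*Real.cos y) + 4*D*(Real.sin y^4*Real.cos y^2)
        - D*Real.sin y^6)
      (2*A*(2*Real.sin x*Real.cos x^2 - Real.sin x^3)
        + B*(4*Real.sin x*Real.cos x^3 - 8*Real.sin x^3*Real.cos x)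
        + 4*C*(4*Real.sin x^3*Real.cos x^2 - Real.sin x^5)
        + D*(16*Real.sin x^3*Real.cos x^3 - 14*Real.sin x^5*Real.cos x)) x := by
  have hs2c := ((Real.hasDerivAt_sin x).pow 2).mul (Real.hasDerivAt_cos x)
  have hs2c2 := ((Real.hasDerivAt_sin x).pow 2).mul ((Real.hasDerivAt_cos x).pow 2)
  have hs4 := (Real.hasDerivAt_sin x).pow 4
  have hs4c := ((Real.hasDerivAt_sin x).pow 4).mul (Real.hasDerivAt_cos x)
  have hs4c2 := ((Real.hasDerivAt_sin x).pow 4).mul ((Real.hasDerivAt_cos x).pow 2)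
  have hs6 := (Real.hasDerivAt_sin x).pow 6
  have h := (((((hs2c.const_mul (2*A)).add (hs2c2.const_mul (2*B))).sub
      (hs4.const_mul B)).add (hs4c.const_mul (4*C))).add
      (hs4c2.const_mul (4*D))).sub (hs6.const_mul D)
  refine h.congr_deriv ?_
  simp only [Pi.add_apply, Pi.sub_apply, Pi.mul_apply, Pi.pow_apply]
  norm_num
  ring

private lemma aux_time (a₀ b₀ a₁ b₁ c σ t : ℝ) :
    HasDerivAt (fun τ =>
      (a₀ + 2 / 3 * a₁ * (1 - Real.exp (-3 * τ)) +
          (b₀ * Real.exp (-τ) + 2 / 5 * b₁ * (Real.exp (-τ) - Real.exp (-6 * τ))) * c) * σ ^ 2 +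
        (a₁ * Real.exp (-3 * τ) + b₁ * Real.exp (-6 * τ) * c) * σ ^ 4)
      ((2*(a₁*Real.exp (-3*t)))*σ^2
        + (-(b₀*Real.exp (-t) + 2/5*b₁*(Real.exp (-t) - Real.exp (-6*t)))
            + 2*(b₁*Real.exp (-6*t)))*c*σ^2
        + (-3*(a₁*Real.exp (-3*t)))*σ^4
        + (-6*(b₁*Real.exp (-6*t)))*c*σ^4) t := by
  have e1 : HasDerivAt (fun τ : ℝ => Real.exp (-τ)) (Real.exp (-t) * (-1)) t :=
    ((hasDerivAt_id t).neg).exp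
  have e3 : HasDerivAt (fun τ : ℝ => Real.exp (-3 * τ)) (Real.exp (-3 * t) * (-3)) t := by
    have := ((hasDerivAt_id t).const_mul (-3)).exp
    simpa using this
  have e6 : HasDerivAt (fun τ : ℝ => Real.exp (-6 * τ)) (Real.exp (-6 * t) * (-6)) t := by
    have := ((hasDerivAt_id t).const_mul (-6)).exp
    simpa using this
  have h := ((((hasDerivAt_const t a₀).add
      (((hasDerivAt_const t (2/3*a₁)).mul ((hasDerivAt_const t 1).sub e3)))).add
      ((((hasDerivAt_const t b₀).mul e1).add
        ((hasDerivAt_const t (2/5*b₁)).mul (e1.sub e6))).mul (hasDerivAt_const t c))).mul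
      (hasDerivAt_const t (σ^2))).add
      ((((hasDerivAt_const t a₁).mul e3).add
        (((hasDerivAt_const t b₁).mul e6).mul (hasDerivAt_const t c))).mul
        (hasDerivAt_const t (σ^4)))
  refine h.congr_deriv ?_
  simp only [Pi.add_apply, Pi.sub_apply, Pi.mul_apply, Pi.pow_apply]
  norm_num
  ring

private lemma aux_main (A B C D σ c : ℝ) (hσ : σ ≠ 0) (hpy : σ^2 + c^2 = 1) :
    (2*C)*σ^2 + (-B + 2*D)*c*σ^2 + (-3*C)*σ^4 + (-6*D)*c*σ^4 =
      1/(2*σ) * (2*A*(2*σ*c^2 - σ^3) + B*(4*σ*c^3 - 8*σ^3*c)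
          + 4*C*(4*σ^3*c^2 - σ^5) + D*(16*σ^3*c^3 - 14*σ^5*c))
        - 2*(c/σ) * (2*A*σ*c + B*(2*σ*c^2 - σ^3) + 4*C*σ^3*c + D*(4*σ^3*c^2 - σ^5))
        + ((1+c^2)/σ^2) * ((A + B*c)*σ^2 + (C + D*c)*σ^4) := by
  have eG : 1/(2*σ) * (2*A*(2*σ*c^2 - σ^3) + B*(4*σ*c^3 - 8*σ^3*c)
      + 4*C*(4*σ^3*c^2 - σ^5) + D*(16*σ^3*c^3 - 14*σ^5*c)) =
      A*(2*c^2 - σ^2) + B*(2*c^3 - 4*σ^2*c) + 2*C*(4*σ^2*c^2 - σ^4)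
        + D*(8*σ^2*c^3 - 7*σ^4*c) := by
    field_simp
    ring
  have eF : 2*(c/σ) * (2*A*σ*c + B*(2*σ*c^2 - σ^3) + 4*C*σ^3*c + D*(4*σ^3*c^2 - σ^5)) =
      2*c*(2*A*c + B*(2*c^2 - σ^2) + 4*C*σ^2*c + D*(4*σ^2*c^2 - σ^4)) := by
    field_simp
  have eS : ((1+c^2)/σ^2) * ((A + B*c)*σ^2 + (C + D*c)*σ^4) =
      (1+c^2) * ((A + B*c) + (C + D*c)*σ^2) := by
    field_simp
  rw [eG, eF, eS]
  linear_combination (A + B*c - C*σ^2 - D*c*σ^2) * hpy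

theorem stmt_12 (a₀ b₀ a₁ b₁ : ℝ) (s : ℝ → ℝ → ℝ)
    (hs : ∀ t θ, s t θ =
      (a₀ + (2 / 3) * a₁ * (1 - Real.exp (-3 * t)) +
          (b₀ * Real.exp (-t) + (2 / 5) * b₁ * (Real.exp (-t) - Real.exp (-6 * t))) *
            Real.cos θ) * Real.sin θ ^ 2 +
        (a₁ * Real.exp (-3 * t) + b₁ * Real.exp (-6 * t) * Real.cos θ) * Real.sin θ ^ 4) :
    (∀ t > (0 : ℝ), ∀ θ ∈ Set.Ioo 0 Real.pi,
      deriv (fun τ => s τ θ) t =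
        (1 / (2 * Real.sin θ)) *
            deriv (fun x => Real.sin x * deriv (fun y => s t y) x) θ -
          2 * (Real.cos θ / Real.sin θ) * deriv (fun y => s t y) θ +
          ((1 + Real.cos θ ^ 2) / Real.sin θ ^ 2) * s t θ) ∧
    (∀ θ, s 0 θ = (a₀ + b₀ * Real.cos θ) * Real.sin θ ^ 2 +
      (a₁ + b₁ * Real.cos θ) * Real.sin θ ^ 4) := by
  constructor
  · intro t _ θ hθ
    have hσ : Real.sin θ ≠ 0 := ne_of_gt (Real.sin_pos_of_pos_of_lt_pi hθ.1 hθ.2)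
    have key : Real.sin θ ^ 2 + Real.cos θ ^ 2 = 1 := Real.sin_sq_add_cos_sq θ
    set σ := Real.sin θ
    set c := Real.cos θ
    set A : ℝ := a₀ + 2 / 3 * a₁ * (1 - Real.exp (-3 * t)) with hAdef
    set B : ℝ := b₀ * Real.exp (-t) + 2 / 5 * b₁ * (Real.exp (-t) - Real.exp (-6 * t)) with hBdef
    set C : ℝ := a₁ * Real.exp (-3 * t) with hCdef
    set D : ℝ := b₁ * Real.exp (-6 * t) with hDdef
    have hsf : (fun y => s t y) = (fun y => (A + B * Real.cos y) * Real.sin y ^ 2 +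
        (C + D * Real.cos y) * Real.sin y ^ 4) := funext fun y => by
      rw [hs t y]
    have hF : ∀ x, deriv (fun y => s t y) x =
        2*A*Real.sin x*Real.cos x + B*(2*Real.sin x*Real.cos x^2 - Real.sin x^3) +
        4*C*Real.sin x^3*Real.cos x + D*(4*Real.sin x^3*Real.cos x^2 - Real.sin x^5) := by
      intro x
      rw [hsf]
      exact (aux_theta A B C D x).deriv
    have hgfun : (fun x => Real.sin x * deriv (fun y => s t y) x) =
        (fun y => 2*A*(Real.sin y^2*Real.cos y) + 2*B*(Real.sin y^2*Real.cos y^2)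
          - B*Real.sin y^4 + 4*C*(Real.sin y^4*Real.cos y) + 4*D*(Real.sin y^4*Real.cos y^2)
          - D*Real.sin y^6) := funext fun x => by
      rw [hF x]; ring
    have hG : deriv (fun x => Real.sin x * deriv (fun y => s t y) x) θ =
        2*A*(2*σ*c^2 - σ^3) + B*(4*σ*c^3 - 8*σ^3*c)
          + 4*C*(4*σ^3*c^2 - σ^5) + D*(16*σ^3*c^3 - 14*σ^5*c) := by
      rw [hgfun]
      exact (aux_g A B C D θ).deriv
    have hFθ : deriv (fun y => s t y) θ =
        2*A*σ*c + B*(2*σ*c^2 - σ^3) + 4*C*σ^3*c + D*(4*σ^3*c^2 - σ^5) := hF θ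
    have hT : deriv (fun τ => s τ θ) t =
        (2*C)*σ^2 + (-B + 2*D)*c*σ^2 + (-3*C)*σ^4 + (-6*D)*c*σ^4 := by
      have heq : (fun τ => s τ θ) = (fun τ =>
        (a₀ + 2 / 3 * a₁ * (1 - Real.exp (-3 * τ)) +
          (b₀ * Real.exp (-τ) + 2 / 5 * b₁ * (Real.exp (-τ) - Real.exp (-6 * τ))) * c) * σ ^ 2 +
        (a₁ * Real.exp (-3 * τ) + b₁ * Real.exp (-6 * τ) * c) * σ ^ 4) :=
        funext fun τ => hs τ θ
      rw [heq, (aux_time a₀ b₀ a₁ b₁ c σ t).deriv, hBdef, hCdef, hDdef]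
    rw [hT, hG, hFθ, hs t θ]
    have := aux_main A B C D σ c hσ key
    convert this using 2
  · intro θ
    rw [hs 0 θ]
    simp only [mul_zero, neg_zero, Real.exp_zero]
    ring
end

section
/- Define s(t,θ) = (a₀ + b₀ cosθ) e^{t/2} sin²θ + (a₁ + b₁ e^{-t} cosθ) sin⁴θ. Then s satisfies for all t and θ ∈ (0,π): ∂s/∂t = (1/(4 sinθ)) ∂/∂θ(sinθ ∂s/∂θ) - (3/2) cotθ ∂s/∂θ + ((1+cos²θ)/sin²θ) s. -/
open Real Set

lemma poly_cos_deriv (k0 k1 k2 k3 k4 k5 k6 : ℝ) (x : ℝ) :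
    HasDerivAt (fun y => k0 + k1 * Real.cos y + k2 * Real.cos y ^ 2 + k3 * Real.cos y ^ 3
        + k4 * Real.cos y ^ 4 + k5 * Real.cos y ^ 5 + k6 * Real.cos y ^ 6)
      (-Real.sin x * (k1 + 2 * k2 * Real.cos x + 3 * k3 * Real.cos x ^ 2
        + 4 * k4 * Real.cos x ^ 3 + 5 * k5 * Real.cos x ^ 4 + 6 * k6 * Real.cos x ^ 5)) x := by
  have hc := Real.hasDerivAt_cos x
  have h := ((((((hc.const_mul k1).const_add k0).fun_add ((hc.fun_pow 2).const_mul k2)).fun_add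
      ((hc.fun_pow 3).const_mul k3)).fun_add ((hc.fun_pow 4).const_mul k4)).fun_add
      ((hc.fun_pow 5).const_mul k5)).fun_add ((hc.fun_pow 6).const_mul k6)
  refine h.congr_deriv ?_
  push_cast
  ring

theorem stmt_13 (a₀ b₀ a₁ b₁ : ℝ) (s : ℝ → ℝ → ℝ)
    (hs : ∀ t θ, s t θ =
      (a₀ + b₀ * Real.cos θ) * Real.exp (t / 2) * Real.sin θ ^ 2 +
        (a₁ + b₁ * Real.exp (-t) * Real.cos θ) * Real.sin θ ^ 4) :
    ∀ (t : ℝ), ∀ θ ∈ Set.Ioo 0 Real.pi,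
      deriv (fun τ => s τ θ) t =
        (1 / (4 * Real.sin θ)) *
            deriv (fun x => Real.sin x * deriv (fun y => s t y) x) θ -
          (3 / 2) * (Real.cos θ / Real.sin θ) * deriv (fun y => s t y) θ +
          ((1 + Real.cos θ ^ 2) / Real.sin θ ^ 2) * s t θ := by
  intro t θ hθ
  have hsin : Real.sin θ ≠ 0 := ne_of_gt (Real.sin_pos_of_pos_of_lt_pi hθ.1 hθ.2)
  set A : ℝ := a₀ * Real.exp (t / 2) with hA
  set B : ℝ := b₀ * Real.exp (t / 2) with hB
  set E : ℝ := b₁ * Real.exp (-t) with hE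
  -- derivative in t
  have h1 : HasDerivAt (fun τ => s τ θ)
      ((a₀ + b₀ * Real.cos θ) * (1 - Real.cos θ ^ 2) * (Real.exp (t / 2) * (1 / 2))
        + b₁ * Real.cos θ * (1 - Real.cos θ ^ 2) ^ 2 * (Real.exp (-t) * (-1))) t := by
    have e : (fun τ => s τ θ) = fun τ =>
        ((a₀ + b₀ * Real.cos θ) * (1 - Real.cos θ ^ 2)) * Real.exp (τ / 2)
          + (b₁ * Real.cos θ * (1 - Real.cos θ ^ 2) ^ 2) * Real.exp (-τ)
          + a₁ * (1 - Real.cos θ ^ 2) ^ 2 := by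
      funext τ; rw [hs, ← Real.sin_sq]; ring
    rw [e]
    have hexp1 : HasDerivAt (fun τ : ℝ => Real.exp (τ / 2)) (Real.exp (t / 2) * (1 / 2)) t := by
      simpa using ((hasDerivAt_id t).div_const 2).exp
    have hexp2 : HasDerivAt (fun τ : ℝ => Real.exp (-τ)) (Real.exp (-t) * (-1)) t := by
      simpa using (hasDerivAt_id t).neg.exp
    have h := ((hexp1.const_mul ((a₀ + b₀ * Real.cos θ) * (1 - Real.cos θ ^ 2))).add
        (hexp2.const_mul (b₁ * Real.cos θ * (1 - Real.cos θ ^ 2) ^ 2))).add_const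
        (a₁ * (1 - Real.cos θ ^ 2) ^ 2)
    exact h
  -- the θ-derivative function
  set P : ℝ → ℝ := fun x =>
      -B * (1 - Real.cos x ^ 2) + 2 * Real.cos x * (A + B * Real.cos x)
        - E * (1 - Real.cos x ^ 2) ^ 2
        + 4 * (1 - Real.cos x ^ 2) * Real.cos x * (a₁ + E * Real.cos x) with hP
  have e2 : (fun y => s t y) = fun y =>
      (A + B * Real.cos y) * (1 - Real.cos y ^ 2)
        + (a₁ + E * Real.cos y) * (1 - Real.cos y ^ 2) ^ 2 := by
    funext y; rw [hs, ← Real.sin_sq, hA, hB, hE]; ring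
  have hx : ∀ x, HasDerivAt (fun y => s t y) (Real.sin x * P x) x := by
    intro x
    rw [e2]
    have hc := Real.hasDerivAt_cos x
    have hc2 : HasDerivAt (fun y => 1 - Real.cos y ^ 2)
        (2 * Real.cos x * Real.sin x) x := by
      have h := (hc.fun_pow 2).const_sub 1
      refine h.congr_deriv ?_
      push_cast
      ring
    have h := (((hc.const_mul B).const_add A).fun_mul hc2).fun_add
        (((hc.const_mul E).const_add a₁).fun_mul (hc2.fun_pow 2))
    refine h.congr_deriv ?_
    simp only [hP]
    push_cast
    ring
  have hDy : deriv (fun y => s t y) = fun x => Real.sin x * P x :=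
    funext fun x => (hx x).deriv
  -- the inner function as a polynomial in cos
  have e3 : (fun x => Real.sin x * deriv (fun y => s t y) x) = fun x =>
      (-B - E) + (2 * A + 4 * a₁) * Real.cos x + (4 * B + 7 * E) * Real.cos x ^ 2
        + (-2 * A - 8 * a₁) * Real.cos x ^ 3 + (-3 * B - 11 * E) * Real.cos x ^ 4
        + (4 * a₁) * Real.cos x ^ 5 + (5 * E) * Real.cos x ^ 6 := by
    funext x
    rw [hDy]
    simp only [hP]
    rw [show Real.sin x * (Real.sin x *
        (-B * (1 - Real.cos x ^ 2) + 2 * Real.cos x * (A + B * Real.cos x)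
          - E * (1 - Real.cos x ^ 2) ^ 2
          + 4 * (1 - Real.cos x ^ 2) * Real.cos x * (a₁ + E * Real.cos x)))
        = Real.sin x ^ 2 * (-B * (1 - Real.cos x ^ 2) + 2 * Real.cos x * (A + B * Real.cos x)
          - E * (1 - Real.cos x ^ 2) ^ 2
          + 4 * (1 - Real.cos x ^ 2) * Real.cos x * (a₁ + E * Real.cos x)) from by ring,
      Real.sin_sq]
    ring
  have hg := poly_cos_deriv (-B - E) (2 * A + 4 * a₁) (4 * B + 7 * E) (-2 * A - 8 * a₁)
      (-3 * B - 11 * E) (4 * a₁) (5 * E) θ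
  -- rewrite everything
  have hsθ : s t θ = (A + B * Real.cos θ) * (1 - Real.cos θ ^ 2)
      + (a₁ + E * Real.cos θ) * (1 - Real.cos θ ^ 2) ^ 2 := by
    rw [hs, ← Real.sin_sq, hA, hB, hE]; ring
  have h1c : (1 : ℝ) - Real.cos θ ^ 2 ≠ 0 := by
    rw [← Real.sin_sq]; exact pow_ne_zero 2 hsin
  rw [h1.deriv, e3, hg.deriv, hDy, hsθ, Real.sin_sq θ]
  simp only [hP]
  simp only [hA, hB, hE]
  field_simp
  ring
end

section
/- Fix λ ≠ 3, λ > 1. Suppose C₀(t) = ψ∞ + C₃ e^{-t} + 2C₂ ((λ-2)/(λ-3)) e^{(2-λ)t} and C₁(t) = C₂ e^{(2-λ)t}. Then ψ(t,θ) = C₀(t) - 2 C₁(t) sin²θ and s(t,θ) = C₁(t) sin²θ solve the system ∂ψ/∂t = ((λ-1)/(2sinθ)) ∂/∂θ(sinθ ∂ψ/∂θ) - λ cotθ ∂ψ/∂θ - 2λ s/sin²θ - ψ + ψ∞ and ∂s/∂t = ((λ-1)/(2sinθ)) ∂/∂θ(sinθ ∂s/∂θ) - λ cotθ ∂s/∂θ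 + ((1+cos²θ)/sin²θ) s. -/
open Real Set

theorem stmt_14 (lam ψinf C₂ C₃ : ℝ) (hlam3 : lam ≠ 3) (hlam1 : 1 < lam)
    (C₀ C₁ : ℝ → ℝ)
    (hC₀ : ∀ t, C₀ t = ψinf + C₃ * Real.exp (-t) +
      2 * C₂ * ((lam - 2) / (lam - 3)) * Real.exp ((2 - lam) * t))
    (hC₁ : ∀ t, C₁ t = C₂ * Real.exp ((2 - lam) * t))
    (ψ s : ℝ → ℝ → ℝ)
    (hψ : ∀ t θ, ψ t θ = C₀ t - 2 * C₁ t * Real.sin θ ^ 2)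
    (hs : ∀ t θ, s t θ = C₁ t * Real.sin θ ^ 2) :
    ∀ (t : ℝ), ∀ θ ∈ Set.Ioo 0 Real.pi,
      (deriv (fun τ => ψ τ θ) t =
        ((lam - 1) / (2 * Real.sin θ)) *
            deriv (fun x => Real.sin x * deriv (fun y => ψ t y) x) θ -
          lam * (Real.cos θ / Real.sin θ) * deriv (fun y => ψ t y) θ -
          2 * lam * s t θ / Real.sin θ ^ 2 - ψ t θ + ψinf) ∧
      (deriv (fun τ => s τ θ) t =
        ((lam - 1) / (2 * Real.sin θ)) *
            deriv (fun x => Real.sin x * deriv (fun y => s t y) x) θ -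
          lam * (Real.cos θ / Real.sin θ) * deriv (fun y => s t y) θ +
          ((1 + Real.cos θ ^ 2) / Real.sin θ ^ 2) * s t θ) := by
  intro t θ hθ
  have hsin : Real.sin θ ≠ 0 := ne_of_gt (Real.sin_pos_of_pos_of_lt_pi hθ.1 hθ.2)
  have hpyth := Real.sin_sq_add_cos_sq θ
  have hc2 : Real.cos θ ^ 2 = 1 - Real.sin θ ^ 2 := by linarith
  have hl3 : lam - 3 ≠ 0 := sub_ne_zero.mpr hlam3
  set E := Real.exp ((2 - lam) * t) with hE
  set E1 := Real.exp (-t) with hE1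
  -- time derivative building blocks
  have hEexp : HasDerivAt (fun τ => Real.exp ((2 - lam) * τ)) ((2 - lam) * E) t := by
    have h := ((hasDerivAt_id t).const_mul (2 - lam)).exp
    simpa [hE, mul_comm] using h
  have hE1d : HasDerivAt (fun τ => Real.exp (-τ)) (-E1) t := by
    simpa [hE1, Function.comp_def] using (Real.hasDerivAt_exp (-t)).comp t (hasDerivAt_neg t)
  -- time derivative of ψ
  have hfunψ : (fun τ => ψ τ θ) =
      fun τ => (ψinf + C₃ * Real.exp (-τ)
        + (2 * C₂ * ((lam - 2) / (lam - 3))) * Real.exp ((2 - lam) * τ))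
        - (2 * C₂ * Real.sin θ ^ 2) * Real.exp ((2 - lam) * τ) := by
    funext τ; rw [hψ, hC₀, hC₁]; ring
  have hψt : HasDerivAt (fun τ => ψ τ θ)
      ((0 + C₃ * (-E1) + (2 * C₂ * ((lam - 2) / (lam - 3))) * ((2 - lam) * E))
        - (2 * C₂ * Real.sin θ ^ 2) * ((2 - lam) * E)) t := by
    rw [hfunψ]
    exact (((hasDerivAt_const t ψinf).add (hE1d.const_mul C₃)).add
      (hEexp.const_mul _)).sub (hEexp.const_mul _)
  -- time derivative of s
  have hfuns : (fun τ => s τ θ) = fun τ => (C₂ * Real.sin θ ^ 2) * Real.exp ((2 - lam) * τ) := by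
    funext τ; rw [hs, hC₁]; ring
  have hst : HasDerivAt (fun τ => s τ θ) ((C₂ * Real.sin θ ^ 2) * ((2 - lam) * E)) t := by
    rw [hfuns]; exact hEexp.const_mul _
  -- spatial derivative of ψ
  have hψspace : (fun y => ψ t y) = fun y => C₀ t - (2 * (C₂ * E)) * Real.sin y ^ 2 := by
    funext y; rw [hψ, hC₁, ← hE]
  have hψθ : ∀ x, HasDerivAt (fun y => ψ t y)
      (-(2 * (C₂ * E)) * (2 * Real.sin x * Real.cos x)) x := by
    intro x
    rw [hψspace]
    have h := (hasDerivAt_const x (C₀ t)).sub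
      (((Real.hasDerivAt_sin x).pow 2).const_mul (2 * (C₂ * E)))
    refine h.congr_deriv ?_
    norm_num
  have hdψ : deriv (fun y => ψ t y) =
      fun x => -(2 * (C₂ * E)) * (2 * Real.sin x * Real.cos x) :=
    funext fun x => (hψθ x).deriv
  -- spatial derivative of s
  have hsspace : (fun y => s t y) = fun y => (C₂ * E) * Real.sin y ^ 2 := by
    funext y; rw [hs, hC₁, ← hE]
  have hsθ : ∀ x, HasDerivAt (fun y => s t y)
      ((C₂ * E) * (2 * Real.sin x * Real.cos x)) x := by
    intro x
    rw [hsspace]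
    have h := ((Real.hasDerivAt_sin x).pow 2).const_mul (C₂ * E)
    refine h.congr_deriv ?_
    norm_num
  have hds : deriv (fun y => s t y) =
      fun x => (C₂ * E) * (2 * Real.sin x * Real.cos x) :=
    funext fun x => (hsθ x).deriv
  -- outer spatial derivative, ψ
  have houterψfun : (fun x => Real.sin x * (-(2 * (C₂ * E)) * (2 * Real.sin x * Real.cos x)))
      = fun x => (-(4 * C₂ * E)) * (Real.sin x * (Real.sin x * Real.cos x)) := by
    funext x; ring
  have houterψ : HasDerivAt
      (fun x => Real.sin x * (-(2 * (C₂ * E)) * (2 * Real.sin x * Real.cos x)))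
      ((-(4 * C₂ * E)) * (Real.cos θ * (Real.sin θ * Real.cos θ)
        + Real.sin θ * (Real.cos θ * Real.cos θ + Real.sin θ * (-Real.sin θ)))) θ := by
    rw [houterψfun]
    exact ((Real.hasDerivAt_sin θ).mul
      ((Real.hasDerivAt_sin θ).mul (Real.hasDerivAt_cos θ))).const_mul _
  -- outer spatial derivative, s
  have houtersfun : (fun x => Real.sin x * ((C₂ * E) * (2 * Real.sin x * Real.cos x)))
      = fun x => ((2 * C₂ * E)) * (Real.sin x * (Real.sin x * Real.cos x)) := by
    funext x; ring
  have houters : HasDerivAt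
      (fun x => Real.sin x * ((C₂ * E) * (2 * Real.sin x * Real.cos x)))
      (((2 * C₂ * E)) * (Real.cos θ * (Real.sin θ * Real.cos θ)
        + Real.sin θ * (Real.cos θ * Real.cos θ + Real.sin θ * (-Real.sin θ)))) θ := by
    rw [houtersfun]
    exact ((Real.hasDerivAt_sin θ).mul
      ((Real.hasDerivAt_sin θ).mul (Real.hasDerivAt_cos θ))).const_mul _
  constructor
  · rw [hψt.deriv, hdψ]
    simp only []
    rw [houterψ.deriv, hψ, hs, hC₀, hC₁, ← hE]
    field_simp
    ring_nf
    rw [hc2]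
    ring
  · rw [hst.deriv, hds]
    simp only []
    rw [houters.deriv, hs, hC₁, ← hE]
    field_simp
    ring_nf
    rw [hc2]
    ring
end

section
/- Fix λ = 3. Then ψ(t,θ) = ψ∞ + (C₃ - 2C₂ t) e^{-t} - 2 C₂ e^{-t} sin²θ and s(t,θ) = C₂ e^{-t} sin²θ solve the linear Hopf flow system ∂ψ/∂t = (1/sinθ) ∂/∂θ(sinθ ∂ψ/∂θ) - 3 cotθ ∂ψ/∂θ - 6 s/sin²θ - ψ + ψ∞ and ∂s/∂t = (1/sinθ) ∂/∂θ(sinθ ∂s/∂θ) - 3 cotθ ∂s/∂θ + ((1+cos²θ)/sin²θ) s. -/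
open Real Set

theorem stmt_15 (ψinf C₂ C₃ : ℝ) (ψ s : ℝ → ℝ → ℝ)
    (hψ : ∀ t θ, ψ t θ = ψinf + (C₃ - 2 * C₂ * t) * Real.exp (-t) -
      2 * C₂ * Real.exp (-t) * Real.sin θ ^ 2)
    (hs : ∀ t θ, s t θ = C₂ * Real.exp (-t) * Real.sin θ ^ 2) :
    ∀ (t : ℝ), ∀ θ ∈ Set.Ioo 0 Real.pi,
      (deriv (fun τ => ψ τ θ) t =
        (1 / Real.sin θ) * deriv (fun x => Real.sin x * deriv (fun y => ψ t y) x) θ -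
          3 * (Real.cos θ / Real.sin θ) * deriv (fun y => ψ t y) θ -
          6 * s t θ / Real.sin θ ^ 2 - ψ t θ + ψinf) ∧
      (deriv (fun τ => s τ θ) t =
        (1 / Real.sin θ) * deriv (fun x => Real.sin x * deriv (fun y => s t y) x) θ -
          3 * (Real.cos θ / Real.sin θ) * deriv (fun y => s t y) θ +
          ((1 + Real.cos θ ^ 2) / Real.sin θ ^ 2) * s t θ) := by
  intro t θ hθ
  have hsin : Real.sin θ ≠ 0 :=
    ne_of_gt (Real.sin_pos_of_pos_of_lt_pi hθ.1 hθ.2)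
  -- spatial derivative of ψ
  have hψθ : ∀ x, deriv (fun y => ψ t y) x
      = -(2 * C₂ * Real.exp (-t)) * (2 * Real.sin x * Real.cos x) := by
    intro x
    have hfun : (fun y => ψ t y) = fun y =>
        (ψinf + (C₃ - 2 * C₂ * t) * Real.exp (-t)) -
          2 * C₂ * Real.exp (-t) * Real.sin y ^ 2 := by
      funext y; rw [hψ]
    rw [hfun]
    have hd : HasDerivAt (fun y =>
        (ψinf + (C₃ - 2 * C₂ * t) * Real.exp (-t)) -
          2 * C₂ * Real.exp (-t) * Real.sin y ^ 2)
        (0 - 2 * C₂ * Real.exp (-t) * (2 * Real.sin x ^ 1 * Real.cos x)) x := by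
      exact (hasDerivAt_const _ _).sub
        (((Real.hasDerivAt_sin x).pow 2).const_mul _)
    rw [hd.deriv]; ring
  -- spatial derivative of s
  have hsθ : ∀ x, deriv (fun y => s t y) x
      = C₂ * Real.exp (-t) * (2 * Real.sin x * Real.cos x) := by
    intro x
    have hfun : (fun y => s t y) = fun y =>
        C₂ * Real.exp (-t) * Real.sin y ^ 2 := funext (hs t)
    rw [hfun]
    have hd : HasDerivAt (fun y => C₂ * Real.exp (-t) * Real.sin y ^ 2)
        (C₂ * Real.exp (-t) * (2 * Real.sin x ^ 1 * Real.cos x)) x :=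
      ((Real.hasDerivAt_sin x).pow 2).const_mul _
    rw [hd.deriv]; ring
  -- second-order term for ψ
  have hψ2 : deriv (fun x => Real.sin x * deriv (fun y => ψ t y) x) θ
      = -(4 * C₂ * Real.exp (-t)) *
          ((2 * Real.sin θ ^ 1 * Real.cos θ) * Real.cos θ +
            Real.sin θ ^ 2 * (-Real.sin θ)) := by
    have hfun : (fun x => Real.sin x * deriv (fun y => ψ t y) x)
        = fun x => -(4 * C₂ * Real.exp (-t)) * (Real.sin x ^ 2 * Real.cos x) := by
      funext x; rw [hψθ x]; ring
    rw [hfun]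
    have hd : HasDerivAt (fun x => -(4 * C₂ * Real.exp (-t)) *
        (Real.sin x ^ 2 * Real.cos x))
        (-(4 * C₂ * Real.exp (-t)) *
          ((2 * Real.sin θ ^ 1 * Real.cos θ) * Real.cos θ +
            Real.sin θ ^ 2 * (-Real.sin θ))) θ :=
      (((Real.hasDerivAt_sin θ).pow 2).mul (Real.hasDerivAt_cos θ)).const_mul _
    rw [hd.deriv]
  -- second-order term for s
  have hs2 : deriv (fun x => Real.sin x * deriv (fun y => s t y) x) θ
      = (2 * C₂ * Real.exp (-t)) *
          ((2 * Real.sin θ ^ 1 * Real.cos θ) * Real.cos θ +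
            Real.sin θ ^ 2 * (-Real.sin θ)) := by
    have hfun : (fun x => Real.sin x * deriv (fun y => s t y) x)
        = fun x => (2 * C₂ * Real.exp (-t)) * (Real.sin x ^ 2 * Real.cos x) := by
      funext x; rw [hsθ x]; ring
    rw [hfun]
    have hd : HasDerivAt (fun x => (2 * C₂ * Real.exp (-t)) *
        (Real.sin x ^ 2 * Real.cos x))
        ((2 * C₂ * Real.exp (-t)) *
          ((2 * Real.sin θ ^ 1 * Real.cos θ) * Real.cos θ +
            Real.sin θ ^ 2 * (-Real.sin θ))) θ :=
      (((Real.hasDerivAt_sin θ).pow 2).mul (Real.hasDerivAt_cos θ)).const_mul _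
    rw [hd.deriv]
  -- time derivative of ψ
  have hψt : deriv (fun τ => ψ τ θ) t
      = (-(2 * C₂) * Real.exp (-t) + (C₃ - 2 * C₂ * t) * (Real.exp (-t) * (-1)))
        - 2 * C₂ * Real.sin θ ^ 2 * (Real.exp (-t) * (-1)) := by
    have hfun : (fun τ => ψ τ θ) = fun τ =>
        (ψinf + (C₃ - 2 * C₂ * τ) * Real.exp (-τ)) -
          2 * C₂ * Real.sin θ ^ 2 * Real.exp (-τ) := by
      funext τ; rw [hψ]; ring
    rw [hfun]
    have he : HasDerivAt (fun τ : ℝ => Real.exp (-τ)) (Real.exp (-t) * (-1)) t := by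
      have : HasDerivAt (fun τ : ℝ => -τ) (-1) t := (hasDerivAt_id t).neg
      exact this.exp
    have hL : HasDerivAt (fun τ : ℝ => C₃ - 2 * C₂ * τ) (-(2 * C₂ * 1)) t :=
      ((hasDerivAt_id t).const_mul (2 * C₂)).const_sub C₃
    have hd : HasDerivAt (fun τ =>
        (ψinf + (C₃ - 2 * C₂ * τ) * Real.exp (-τ)) -
          2 * C₂ * Real.sin θ ^ 2 * Real.exp (-τ))
        ((0 + (-(2 * C₂ * 1) * Real.exp (-t) +
          (C₃ - 2 * C₂ * t) * (Real.exp (-t) * (-1)))) -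
          2 * C₂ * Real.sin θ ^ 2 * (Real.exp (-t) * (-1))) t :=
      ((hasDerivAt_const t ψinf).add (hL.mul he)).sub (he.const_mul _)
    rw [hd.deriv]; ring
  -- time derivative of s
  have hst : deriv (fun τ => s τ θ) t
      = C₂ * Real.sin θ ^ 2 * (Real.exp (-t) * (-1)) := by
    have hfun : (fun τ => s τ θ) = fun τ =>
        C₂ * Real.sin θ ^ 2 * Real.exp (-τ) := by
      funext τ; rw [hs]; ring
    rw [hfun]
    have he : HasDerivAt (fun τ : ℝ => Real.exp (-τ)) (Real.exp (-t) * (-1)) t := by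
      have : HasDerivAt (fun τ : ℝ => -τ) (-1) t := (hasDerivAt_id t).neg
      exact this.exp
    rw [(he.const_mul (C₂ * Real.sin θ ^ 2)).deriv]
  have hpyth : Real.sin θ ^ 2 + Real.cos θ ^ 2 = 1 := Real.sin_sq_add_cos_sq θ
  constructor
  · rw [hψt, hψ2, hψθ θ, hψ t θ, hs t θ]
    field_simp
    linear_combination (-(4 * C₂ * Real.exp (-t))) * hpyth
  · rw [hst, hs2, hsθ θ, hs t θ]
    field_simp
    linear_combination C₂ * hpyth
end
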